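/- Let A and B be n×n complex matrices. Then there exists c ∈ ℂ with |c| = 1 and A·B = c • B if and only if for every positive semidefinite n×n complex matrix ρ one has (A·B)·ρ·(A·B)ᴴ = B·ρ·Bᴴ. -/

import Mathlib

open Matrix ComplexOrder

private lemma outer_psd {n : ℕ} (w : Fin n → ℂ) :
    (vecMulVec w (star w)).PosSemidef := by
  have := Matrix.posSemidef_self_mul_conjTranspose (Matrix.replicateCol Unit w)
  rwa [Matrix.conjTranspose_replicateCol, ← Matrix.vecMulVec_eq] at this

private lemma mul_outer {n : ℕ} (M : Matrix (Fin n) (Fin n) ℂ) (u v : Fin n → ℂ) :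
    M * vecMulVec u v = vecMulVec (M *ᵥ u) v := by
  ext i j
  simp [Matrix.mul_apply, Matrix.vecMulVec_apply, Matrix.mulVec, dotProduct,
    Finset.sum_mul, mul_assoc]

private lemma outer_mul {n : ℕ} (M : Matrix (Fin n) (Fin n) ℂ) (u w : Fin n → ℂ) :
    vecMulVec u (star w) * Mᴴ = vecMulVec u (star (M *ᵥ w)) := by
  ext i j
  simp only [Matrix.mul_apply, Matrix.vecMulVec_apply, Matrix.conjTranspose_apply,
    Matrix.mulVec, dotProduct, Pi.star_apply, star_sum, star_mul',
    Finset.mul_sum]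
  refine Finset.sum_congr rfl fun k _ => by ring

private lemma entry_eq {n : ℕ} (M : Matrix (Fin n) (Fin n) ℂ) (w : Fin n → ℂ) (i j : Fin n) :
    (M * vecMulVec w (star w) * Mᴴ) i j = (M *ᵥ w) i * star ((M *ᵥ w) j) := by
  rw [mul_outer, outer_mul, Matrix.vecMulVec_apply, Pi.star_apply]

private lemma polarize {n : ℕ} (M N : Matrix (Fin n) (Fin n) ℂ)
    (h : ∀ w : Fin n → ℂ, ∀ i j,
      (M *ᵥ w) i * star ((M *ᵥ w) j) = (N *ᵥ w) i * star ((N *ᵥ w) j)) :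
    ∀ u v : Fin n → ℂ, ∀ i j,
      (M *ᵥ u) i * star ((M *ᵥ v) j) = (N *ᵥ u) i * star ((N *ᵥ v) j) := by
  intro u v i j
  have E1 := h u i j
  have E2 := h v i j
  have E3 := h (u + v) i j
  have E4 := h (u + Complex.I • v) i j
  simp only [Matrix.mulVec_add, Matrix.mulVec_smul, Pi.add_apply, Pi.smul_apply,
    smul_eq_mul, star_add, star_mul', Complex.star_def, Complex.conj_I] at E3 E4
  simp only [Complex.star_def] at E1 E2 ⊢
  have hI3 : Complex.I ^ 3 = -Complex.I := by
    rw [pow_succ, Complex.I_sq]; ring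
  linear_combination (norm := (ring_nf; simp only [Complex.I_sq, hI3]; ring1))
    (E3 - E1 - E2) / 2 + Complex.I * (E4 - E1 - E2) / 2

theorem left_absorb_iff_semantics {n : ℕ} (A B : Matrix (Fin n) (Fin n) ℂ) :
    (∃ c : ℂ, ‖c‖ = 1 ∧ A * B = c • B) ↔
      (∀ ρ : Matrix (Fin n) (Fin n) ℂ, ρ.PosSemidef →
        (A * B) * ρ * (A * B)ᴴ = B * ρ * Bᴴ) := by
  constructor
  · rintro ⟨c, hc, hAB⟩ ρ hρ
    have hcc : c * star c = 1 := by
      rw [Complex.star_def, Complex.mul_conj, Complex.normSq_eq_norm_sq, hc]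
      norm_num
    rw [hAB, Matrix.conjTranspose_smul, Matrix.smul_mul, Matrix.smul_mul,
      Matrix.mul_smul, smul_smul, hcc, one_smul]
  · intro h
    have key : ∀ u v : Fin n → ℂ, ∀ i j,
        ((A * B) *ᵥ u) i * star (((A * B) *ᵥ v) j) = (B *ᵥ u) i * star ((B *ᵥ v) j) := by
      refine polarize _ _ fun w i j => ?_
      have hw := h (vecMulVec w (star w)) (outer_psd w)
      have := congrFun (congrFun hw i) j
      rwa [entry_eq, entry_eq] at this
    by_cases hB : B = 0
    · exact ⟨1, by simp, by simp [hB]⟩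
    · obtain ⟨j0, k0, hjk⟩ : ∃ j k, B j k ≠ 0 := by
        by_contra hc
        push_neg at hc
        exact hB (Matrix.ext fun i j => hc i j)
      set v0 : Fin n → ℂ := Pi.single k0 1 with hv0
      have hBv0 : (B *ᵥ v0) j0 = B j0 k0 := by
        simp [hv0, Matrix.mulVec_single]
      set a : ℂ := ((A * B) *ᵥ v0) j0 with ha
      set b : ℂ := (B *ᵥ v0) j0 with hb
      have hbne : b ≠ 0 := by rw [hBv0]; exact hjk
      have haa : a * star a = b * star b := key v0 v0 j0 j0
      have hane : a ≠ 0 := by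
        intro h0
        apply hbne
        have : b * star b = 0 := by rw [← haa, h0, zero_mul]
        simpa [Complex.star_def, Complex.mul_conj, Complex.normSq_eq_zero] using this
      have hns : Complex.normSq a = Complex.normSq b := by
        have h' := haa
        simp only [Complex.star_def, Complex.mul_conj] at h'
        exact_mod_cast h'
      have habs : ‖a‖ = ‖b‖ := by
        rw [Complex.norm_def, Complex.norm_def, hns]
      refine ⟨star b / star a, ?_, ?_⟩
      · rw [norm_div]
        simp only [Complex.star_def, Complex.norm_conj]
        rw [habs, div_self (norm_ne_zero_iff.mpr hbne)]
      · ext i k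
        have hu := key (Pi.single k 1) v0 i j0
        have hM : ((A * B) *ᵥ Pi.single k 1) i = (A * B) i k := by
          simp [Matrix.mulVec_single]
        have hN : (B *ᵥ Pi.single k 1) i = B i k := by
          simp [Matrix.mulVec_single]
        rw [hM, hN, ← ha, ← hb] at hu
        have hsa : star a ≠ 0 := star_ne_zero.mpr hane
        rw [Matrix.smul_apply, smul_eq_mul, div_mul_eq_mul_div, eq_comm, div_eq_iff hsa,
          eq_comm]
        linear_combination hu
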